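/- Let G be a topologically closed oligomorphic permutation group on a countably infinite set Ω acting without algebraicity, let U ⊆ Ω^n be G-invariant, let ∼ be a G-invariant equivalence relation on U, let B := U/∼ be dense, and assume the induced action of G on B is without algebraicity. Then the entanglement relation is the graph of a bijection θ: Ω → B, and θ is G-equivariant: θ(g·a) = g·θ(a) for all g ∈ G and a ∈ Ω. In particular, the actions of G on Ω and on B are isomorphic via θ. -/

import Mathlib

/-- The topology of pointwise convergence on functions `α → β`
(product topology with `β` discrete). -/
def FnTop (α β : Type*) : TopologicalSpace (α → β) :=
  @Pi.topologicalSpace α (fun _ => β) (fun _ => ⊥)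

/-- The coordinatewise action of a permutation on tuples. -/
def tAct {Ω : Type*} (g : Equiv.Perm Ω) {n : ℕ} (u : Fin n → Ω) : Fin n → Ω :=
  fun i => g (u i)

/-- The action of a permutation on sets of tuples. -/
def sAct {Ω : Type*} (g : Equiv.Perm Ω) {n : ℕ} (c : Set (Fin n → Ω)) : Set (Fin n → Ω) :=
  tAct g '' c

/-- A set of permutations is oligomorphic if for every `n` its coordinatewise
action on `n`-tuples has finitely many orbits. -/
def Oligo {Ω : Type*} (G : Set (Equiv.Perm Ω)) : Prop :=
  ∀ n : ℕ, Set.Finite {o : Set (Fin n → Ω) | ∃ t : Fin n → Ω, o = {s | ∃ g ∈ G, s = tAct g t}}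

/-- `G` acts without algebraicity on `Ω`: if the orbit of `a` under the pointwise
stabiliser of a finite tuple `y` is finite, then `a` is an entry of `y`. -/
def NoAlg {Ω : Type*} (G : Set (Equiv.Perm Ω)) : Prop :=
  ∀ (m : ℕ) (y : Fin m → Ω) (a : Ω),
    Set.Finite {b : Ω | ∃ g ∈ G, (∀ i, g (y i) = y i) ∧ b = g a} → ∃ i, a = y i

/-- `G` is topologically closed in the space of permutations with the topology of
pointwise convergence. -/
def TopClosedPerm {Ω : Type*} (G : Set (Equiv.Perm Ω)) : Prop :=
  @IsClosed (Ω → Ω) (FnTop Ω Ω) {f | ∃ g ∈ G, f = ⇑g}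

/-- The `r`-equivalence class of a tuple `u ∈ U`. -/
def cls {Ω : Type*} {n : ℕ} (U : Set (Fin n → Ω))
    (r : (Fin n → Ω) → (Fin n → Ω) → Prop) (u : Fin n → Ω) : Set (Fin n → Ω) :=
  {v ∈ U | r u v}

/-- The quotient `B = U/∼`, realised as the set of equivalence classes. -/
def classes {Ω : Type*} {n : ℕ} (U : Set (Fin n → Ω))
    (r : (Fin n → Ω) → (Fin n → Ω) → Prop) : Set (Set (Fin n → Ω)) :=
  {c | ∃ u ∈ U, c = cls U r u}

/-- `a` entangles the class `c` if `a` is an entry of every tuple in `c`. -/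
def Entangles {Ω : Type*} {n : ℕ} (a : Ω) (c : Set (Fin n → Ω)) : Prop :=
  ∀ v ∈ c, ∃ i, v i = a

/-- `a` strongly entangles `c ∈ B` if it entangles `c` and no other element of `B`. -/
def StronglyEntangles {Ω : Type*} {n : ℕ} (B : Set (Set (Fin n → Ω))) (a : Ω)
    (c : Set (Fin n → Ω)) : Prop :=
  Entangles a c ∧ ∀ c' ∈ B, Entangles a c' → c' = c

/-- `a` is algebraic over `c`: the orbit of `a` under the stabiliser `G_c` is finite. -/
def AlgebraicOver {Ω : Type*} {n : ℕ} (G : Set (Equiv.Perm Ω)) (a : Ω)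
    (c : Set (Fin n → Ω)) : Prop :=
  Set.Finite {b : Ω | ∃ g ∈ G, sAct g c = c ∧ b = g a}

/-- `B` is dense: for every `a ∈ Ω` there are `c₁,…,c_k ∈ B` whose joint stabiliser
is contained in the stabiliser of `a`. -/
def DenseClasses {Ω : Type*} {n : ℕ} (G : Set (Equiv.Perm Ω))
    (B : Set (Set (Fin n → Ω))) : Prop :=
  ∀ a : Ω, ∃ (k : ℕ) (cc : Fin k → Set (Fin n → Ω)),
    (∀ i, cc i ∈ B) ∧ ∀ g ∈ G, (∀ i, sAct g (cc i) = cc i) → g a = a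

/-- The induced action of `G` on `B` is without algebraicity. -/
def NoAlgOn {Ω : Type*} {n : ℕ} (G : Set (Equiv.Perm Ω))
    (B : Set (Set (Fin n → Ω))) : Prop :=
  ∀ (m : ℕ) (cc : Fin m → Set (Fin n → Ω)) (c : Set (Fin n → Ω)),
    (∀ i, cc i ∈ B) → c ∈ B →
    Set.Finite {c' | ∃ g ∈ G, (∀ i, sAct g (cc i) = cc i) ∧ c' = sAct g c} →
    ∃ i, c = cc i


/- ======================= Auxiliary development ======================= -/

open MulAction Pointwise

namespace EntangleProof

variable {Ω : Type} {n : ℕ}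

lemma tAct_smul (g : Equiv.Perm Ω) (u : Fin n → Ω) : tAct g u = g • u := rfl

lemma sAct_smul (g : Equiv.Perm Ω) (c : Set (Fin n → Ω)) : sAct g c = g • c := rfl

lemma sAct_sAct (g h : Equiv.Perm Ω) (c : Set (Fin n → Ω)) :
    sAct g (sAct h c) = sAct (g * h) c := by
  rw [sAct_smul, sAct_smul, sAct_smul, mul_smul]

lemma tAct_inv_tAct (g : Equiv.Perm Ω) (u : Fin n → Ω) : tAct g⁻¹ (tAct g u) = u := by
  funext i; simp [tAct]

lemma tAct_tAct_inv (g : Equiv.Perm Ω) (u : Fin n → Ω) : tAct g (tAct g⁻¹ u) = u := by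
  funext i; simp [tAct]

/-- Bundle of all the standing hypotheses. -/
structure Setup (G : Subgroup (Equiv.Perm Ω)) (U : Set (Fin n → Ω))
    (r : (Fin n → Ω) → (Fin n → Ω) → Prop) : Prop where
  hGnoalg : NoAlg (G : Set (Equiv.Perm Ω))
  hUinv : ∀ g ∈ G, ∀ u ∈ U, tAct g u ∈ U
  hrefl : ∀ u ∈ U, r u u
  hsymm : ∀ u ∈ U, ∀ v ∈ U, r u v → r v u
  htrans : ∀ u ∈ U, ∀ v ∈ U, ∀ w ∈ U, r u v → r v w → r u w
  hrinv : ∀ g ∈ G, ∀ u ∈ U, ∀ v ∈ U, r u v → r (tAct g u) (tAct g v)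
  hdense : DenseClasses (G : Set (Equiv.Perm Ω)) (classes U r)
  hBnoalg : NoAlgOn (G : Set (Equiv.Perm Ω)) (classes U r)

variable {G : Subgroup (Equiv.Perm Ω)} {U : Set (Fin n → Ω)}
  {r : (Fin n → Ω) → (Fin n → Ω) → Prop}

lemma Setup.mem_cls_self (S : Setup G U r) {u : Fin n → Ω} (hu : u ∈ U) :
    u ∈ cls U r u := ⟨hu, S.hrefl u hu⟩

lemma cls_subset {u : Fin n → Ω} : cls U r u ⊆ U := fun _ hv => hv.1

lemma Setup.cls_eq_of_mem (S : Setup G U r) {u v : Fin n → Ω} (hu : u ∈ U)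
    (hv : v ∈ cls U r u) : cls U r v = cls U r u := by
  obtain ⟨hvU, huv⟩ := hv
  ext w
  constructor
  · rintro ⟨hwU, hvw⟩
    exact ⟨hwU, S.htrans u hu v hvU w hwU huv hvw⟩
  · rintro ⟨hwU, huw⟩
    exact ⟨hwU, S.htrans v hvU u hu w hwU (S.hsymm u hu v hvU huv) huw⟩

lemma Setup.sAct_cls (S : Setup G U r) {g : Equiv.Perm Ω} (hg : g ∈ G)
    {u : Fin n → Ω} (hu : u ∈ U) :
    sAct g (cls U r u) = cls U r (tAct g u) := by
  ext w
  constructor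
  · rintro ⟨v, ⟨hvU, huv⟩, rfl⟩
    exact ⟨S.hUinv g hg v hvU, S.hrinv g hg u hu v hvU huv⟩
  · rintro ⟨hwU, huw⟩
    refine ⟨tAct g⁻¹ w, ⟨S.hUinv g⁻¹ (inv_mem hg) w hwU, ?_⟩, tAct_tAct_inv g w⟩
    have := S.hrinv g⁻¹ (inv_mem hg) (tAct g u) (S.hUinv g hg u hu) w hwU huw
    rwa [tAct_inv_tAct] at this

lemma mem_classes_iff {c : Set (Fin n → Ω)} :
    c ∈ classes U r ↔ ∃ u ∈ U, c = cls U r u := Iff.rfl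

lemma Setup.classes_elim (S : Setup G U r) {c : Set (Fin n → Ω)}
    (hc : c ∈ classes U r) : ∃ u, u ∈ U ∧ c = cls U r u ∧ u ∈ c := by
  obtain ⟨u, hu, rfl⟩ := hc
  exact ⟨u, hu, rfl, S.mem_cls_self hu⟩

lemma Setup.sAct_mem_classes (S : Setup G U r) {g : Equiv.Perm Ω} (hg : g ∈ G)
    {c : Set (Fin n → Ω)} (hc : c ∈ classes U r) : sAct g c ∈ classes U r := by
  obtain ⟨u, hu, rfl⟩ := hc
  exact ⟨tAct g u, S.hUinv g hg u hu, S.sAct_cls hg hu⟩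

/-- If `g ∈ G` fixes some member of a class pointwise, it stabilises the class. -/
lemma Setup.sAct_eq_of_fix_rep (S : Setup G U r) {g : Equiv.Perm Ω} (hg : g ∈ G)
    {c : Set (Fin n → Ω)} (hc : c ∈ classes U r) {v : Fin n → Ω} (hv : v ∈ c)
    (hfix : tAct g v = v) : sAct g c = c := by
  obtain ⟨u, hu, rfl⟩ := hc
  have hvU : v ∈ U := hv.1
  have hcls : cls U r v = cls U r u := S.cls_eq_of_mem hu hv
  calc sAct g (cls U r u) = sAct g (cls U r v) := by rw [hcls]
    _ = cls U r (tAct g v) := S.sAct_cls hg hvU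
    _ = cls U r v := by rw [hfix]
    _ = cls U r u := hcls

lemma entangles_sAct {a : Ω} {c : Set (Fin n → Ω)} (h : Entangles a c)
    (g : Equiv.Perm Ω) : Entangles (g a) (sAct g c) := by
  rintro v ⟨w, hw, rfl⟩
  obtain ⟨i, hi⟩ := h w hw
  exact ⟨i, by simp [tAct, hi]⟩

lemma entangler_mem_range {x : Ω} {c : Set (Fin n → Ω)} {v : Fin n → Ω}
    (hv : v ∈ c) (h : Entangles x c) : x ∈ Set.range v := by
  obtain ⟨i, hi⟩ := h v hv
  exact ⟨i, hi⟩

/-- Orbit of an element under a subgroup, concretely. -/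
lemma orbit_subgroup_eq {X : Type*} [MulAction (Equiv.Perm Ω) X]
    (K : Subgroup (Equiv.Perm Ω)) (x : X) :
    orbit ↥K x = {z | ∃ g ∈ K, z = g • x} := by
  ext z
  constructor
  · rintro ⟨k, rfl⟩
    exact ⟨(k : Equiv.Perm Ω), k.2, rfl⟩
  · rintro ⟨g, hg, rfl⟩
    exact ⟨⟨g, hg⟩, rfl⟩

/-- Orbit bounding: if the `K`-orbit of `x` is finite and the orbit of `y` under
`K ⊓ Stab(x)` is finite, then the `K`-orbit of `y` is finite. -/
lemma orbit_finite_trans {Γ : Type*} [Group Γ] {X Y : Type*} [MulAction Γ X]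
    [MulAction Γ Y] (K : Subgroup Γ) (x : X) (y : Y)
    (h1 : (orbit ↥K x).Finite)
    (h2 : (orbit ↥(K ⊓ stabilizer Γ x) y).Finite) :
    (orbit ↥K y).Finite := by
  classical
  have hrep : ∀ z : X, ∃ g : Γ, z ∈ orbit ↥K x → g ∈ K ∧ g • x = z := by
    intro z
    by_cases hz : z ∈ orbit ↥K x
    · obtain ⟨k, hk⟩ := hz
      exact ⟨(k : Γ), fun _ => ⟨k.2, hk⟩⟩
    · exact ⟨1, fun h => absurd h hz⟩
  choose rep hrepspec using hrep
  have hsub : orbit ↥K y ⊆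
      ⋃ z ∈ orbit ↥K x, (rep z • ·) '' (orbit ↥(K ⊓ stabilizer Γ x) y) := by
    rintro w ⟨k, rfl⟩
    have hz : ((k : Γ) • x) ∈ orbit ↥K x := ⟨k, rfl⟩
    obtain ⟨hgK, hgx⟩ := hrepspec ((k : Γ) • x) hz
    set g := rep ((k : Γ) • x) with hg
    have hmem : g⁻¹ * (k : Γ) ∈ K ⊓ stabilizer Γ x := by
      rw [Subgroup.mem_inf]
      refine ⟨mul_mem (inv_mem hgK) k.2, ?_⟩
      rw [mem_stabilizer_iff, mul_smul, ← hgx, inv_smul_smul]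
    refine Set.mem_biUnion hz ?_
    refine ⟨(⟨g⁻¹ * (k : Γ), hmem⟩ : ↥(K ⊓ stabilizer Γ x)) • y, ⟨_, rfl⟩, ?_⟩
    show g • ((g⁻¹ * (k : Γ)) • y) = (k : Γ) • y
    rw [← mul_smul, mul_inv_cancel_left]
  exact Set.Finite.subset (Set.Finite.biUnion h1 (fun z _ => h2.image _)) hsub

/-- B. H. Neumann avoidance: if the `Γ`-orbit of `e` is infinite, then there is
`h : Γ` moving every element of a finite list away from `e`. -/
lemma exists_smul_ne {Γ : Type*} [Group Γ] {Y : Type*} [MulAction Γ Y]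
    (e : Y) (he : ¬ (orbit Γ e).Finite) (l : List Y) :
    ∃ h : Γ, ∀ d ∈ l, h • d ≠ e := by
  classical
  by_contra hcon
  push_neg at hcon
  set P : Fin l.length → Prop := fun j => ∃ h : Γ, h • l.get j = e with hP
  have gsel : ∀ j : Fin l.length, ∃ g : Γ, P j → g • l.get j = e := by
    intro j
    by_cases hj : P j
    · exact ⟨hj.choose, fun _ => hj.choose_spec⟩
    · exact ⟨1, fun h => absurd h hj⟩
  choose gs hgs using gsel
  have hcovers : ⋃ j ∈ Finset.univ.filter P,
      gs j • ((stabilizer Γ (l.get j) : Subgroup Γ) : Set Γ) = Set.univ := by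
    ext h
    simp only [Set.mem_univ, iff_true, Set.mem_iUnion]
    obtain ⟨d, hd, hde⟩ := hcon h
    obtain ⟨j, hj⟩ := List.mem_iff_get.mp hd
    have hPj : P j := ⟨h, by rw [hj]; exact hde⟩
    refine ⟨j, Finset.mem_filter.mpr ⟨Finset.mem_univ _, hPj⟩, ?_⟩
    rw [Set.mem_smul_set_iff_inv_smul_mem]
    have hgj : gs j • l.get j = e := hgs j hPj
    have : ((gs j)⁻¹ * h) • l.get j = l.get j := by
      rw [mul_smul, hj, hde, ← hgj, inv_smul_smul]
      exact hj
    exact this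
  obtain ⟨j, hjmem, hFI⟩ := Subgroup.exists_finiteIndex_of_leftCoset_cover hcovers
  have hPj : P j := (Finset.mem_filter.mp hjmem).2
  haveI := hFI
  have hfin : (orbit Γ (l.get j)).Finite := by
    have : Finite (orbit Γ (l.get j)) :=
      Finite.of_equiv _ (orbitEquivQuotientStabilizer Γ (l.get j)).symm
    exact Set.toFinite _
  obtain ⟨h0, hh0⟩ := hPj
  have horb : orbit Γ e ⊆ orbit Γ (l.get j) := by
    rintro w ⟨g, rfl⟩
    refine ⟨g * h0, ?_⟩
    show (g * h0) • l.get j = g • e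
    rw [mul_smul, hh0]
  exact he (hfin.subset horb)

/-- Every element entangles at least one class. -/
lemma Setup.exists_entangled (S : Setup G U r) (a : Ω) :
    ∃ c, c ∈ classes U r ∧ Entangles a c := by
  classical
  obtain ⟨k, cc, hccB, hccd⟩ := S.hdense a
  by_contra hno
  push_neg at hno
  have hv : ∀ i : Fin k, ∃ v, v ∈ cc i ∧ ∀ j, v j ≠ a := by
    intro i
    have := hno (cc i) (hccB i)
    unfold Entangles at this
    push_neg at this
    obtain ⟨v, hv1, hv2⟩ := this
    exact ⟨v, hv1, hv2⟩
  choose v hvmem hvne using hv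
  set ys : List Ω := (List.finRange k).flatMap (fun i => List.ofFn (v i)) with hys
  have hfix : ∀ g ∈ (G : Set (Equiv.Perm Ω)), (∀ j, g (ys.get j) = ys.get j) → g a = a := by
    intro g hg hgfix
    have hmemfix : ∀ x ∈ ys, g x = x := by
      intro x hx
      obtain ⟨j, hj⟩ := List.mem_iff_get.mp hx
      rw [← hj]; exact hgfix j
    have hstab : ∀ i, sAct g (cc i) = cc i := by
      intro i
      refine S.sAct_eq_of_fix_rep hg (hccB i) (hvmem i) ?_
      funext j
      refine hmemfix (v i j) ?_
      rw [hys]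
      refine List.mem_flatMap.mpr ⟨i, List.mem_finRange i, ?_⟩
      rw [List.mem_ofFn]
      exact ⟨j, rfl⟩
    exact hccd g hg hstab
  have hfin : Set.Finite {b : Ω | ∃ g ∈ (G : Set (Equiv.Perm Ω)),
      (∀ j, g (ys.get j) = ys.get j) ∧ b = g a} := by
    refine (Set.finite_singleton a).subset ?_
    rintro b ⟨g, hg, hfx, rfl⟩
    simp only [Set.mem_singleton_iff]
    exact hfix g hg hfx
  obtain ⟨j, hj⟩ := S.hGnoalg ys.length ys.get a hfin
  have ha : a ∈ ys := by rw [hj]; exact List.get_mem ys j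
  rw [hys] at ha
  obtain ⟨i, _, hmem⟩ := List.mem_flatMap.mp ha
  rw [List.mem_ofFn] at hmem
  obtain ⟨j', hj'⟩ := hmem
  exact hvne i j' hj'

/-- The orbit of an entangler of `c` under `G ⊓ Stab(c)` is finite. -/
lemma Setup.orbit_entangler_finite (S : Setup G U r) {a : Ω} {c : Set (Fin n → Ω)}
    (hc : c ∈ classes U r) (hac : Entangles a c)
    (K : Subgroup (Equiv.Perm Ω)) (hK : K ≤ G ⊓ stabilizer (Equiv.Perm Ω) c) :
    (orbit ↥K a).Finite := by
  obtain ⟨u, huU, hcu, humem⟩ := S.classes_elim hc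
  refine (Set.finite_range u).subset ?_
  rw [orbit_subgroup_eq]
  rintro b ⟨g, hg, rfl⟩
  obtain ⟨hgG, hgc⟩ := Subgroup.mem_inf.mp (hK hg)
  rw [mem_stabilizer_iff] at hgc
  have : Entangles (g a) (sAct g c) := entangles_sAct hac g
  rw [sAct_smul, hgc] at this
  exact entangler_mem_range humem this

/-- If `a ≠ y` and `a` entangles `c`, the orbit of `c` under `G ⊓ Stab(y)` is infinite. -/
lemma Setup.orbit_class_infinite (S : Setup G U r) {a y : Ω} (hay : a ≠ y)
    {c : Set (Fin n → Ω)} (hc : c ∈ classes U r) (hac : Entangles a c) :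
    ¬ (orbit ↥(G ⊓ stabilizer (Equiv.Perm Ω) y) c).Finite := by
  intro hfin
  set K : Subgroup (Equiv.Perm Ω) := G ⊓ stabilizer (Equiv.Perm Ω) y with hKdef
  have h2 : (orbit ↥(K ⊓ stabilizer (Equiv.Perm Ω) c) a).Finite := by
    refine S.orbit_entangler_finite hc hac _ ?_
    intro g hg
    obtain ⟨hg1, hg2⟩ := Subgroup.mem_inf.mp hg
    exact Subgroup.mem_inf.mpr ⟨(Subgroup.mem_inf.mp hg1).1, hg2⟩
  have h1 : (orbit ↥K a).Finite := orbit_finite_trans K c a hfin h2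
  -- contradict NoAlg
  have hfin' : Set.Finite {b : Ω | ∃ g ∈ (G : Set (Equiv.Perm Ω)),
      (∀ i, g ((fun _ : Fin 1 => y) i) = (fun _ : Fin 1 => y) i) ∧ b = g a} := by
    refine h1.subset ?_
    rw [orbit_subgroup_eq]
    rintro b ⟨g, hg, hgy, rfl⟩
    exact ⟨g, Subgroup.mem_inf.mpr ⟨hg, by rw [mem_stabilizer_iff]; exact hgy 0⟩, rfl⟩
  obtain ⟨i, hi⟩ := S.hGnoalg 1 (fun _ : Fin 1 => y) a hfin'
  exact hay hi

/-- Core finiteness: the classes entangled by `a` all lie in the fixed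
density family of `a`; in particular there are finitely many of them. -/
lemma Setup.entangled_finite (S : Setup G U r) (a : Ω) :
    {c | c ∈ classes U r ∧ Entangles a c}.Finite := by
  classical
  obtain ⟨k0, cc0, hB0, hd0⟩ := S.hdense a
  refine (Set.finite_range cc0).subset ?_
  rintro e ⟨heB, hea⟩
  obtain ⟨w, hwU, hew, hwe⟩ := S.classes_elim heB
  -- a is an entry of w
  obtain ⟨i0, hi0⟩ := hea w hwe
  -- for each coordinate, a family of classes pinning that entry and avoiding e if possible
  have hfam : ∀ i : Fin n, ∃ L : List (Set (Fin n → Ω)),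
      (∀ d ∈ L, d ∈ classes U r) ∧
      (∀ g ∈ (G : Set (Equiv.Perm Ω)), (∀ d ∈ L, sAct g d = d) → g (w i) = w i) ∧
      (w i ≠ a → e ∉ L) ∧
      (w i = a → L = List.ofFn cc0) := by
    intro i
    by_cases hwa : w i = a
    · refine ⟨List.ofFn cc0, ?_, ?_, fun h => absurd hwa h, fun _ => rfl⟩
      · intro d hd
        rw [List.mem_ofFn] at hd
        obtain ⟨j, rfl⟩ := hd
        exact hB0 j
      · intro g hg hfx
        rw [hwa]
        refine hd0 g hg ?_
        intro j
        exact hfx (cc0 j) (by rw [List.mem_ofFn]; exact ⟨j, rfl⟩)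
    · -- w i ≠ a : use avoidance
      obtain ⟨k1, cc1, hB1, hd1⟩ := S.hdense (w i)
      set Γ : Subgroup (Equiv.Perm Ω) := G ⊓ stabilizer (Equiv.Perm Ω) (w i) with hΓ
      have hinf : ¬ (orbit ↥Γ e).Finite :=
        S.orbit_class_infinite (fun h => hwa h.symm) heB hea
      obtain ⟨h, hh⟩ := exists_smul_ne e hinf (List.ofFn cc1)
      refine ⟨(List.ofFn cc1).map (fun d => sAct (h : Equiv.Perm Ω) d), ?_, ?_, ?_,
        fun hcontra => absurd hcontra hwa⟩
      · intro d hd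
        rw [List.mem_map] at hd
        obtain ⟨d0, hd0', rfl⟩ := hd
        rw [List.mem_ofFn] at hd0'
        obtain ⟨j, rfl⟩ := hd0'
        exact S.sAct_mem_classes (Subgroup.mem_inf.mp h.2).1 (hB1 j)
      · intro g hg hfx
        have hgG : g ∈ G := hg
        have hconj : ∀ j, sAct ((h : Equiv.Perm Ω)⁻¹ * g * (h : Equiv.Perm Ω)) (cc1 j) = cc1 j := by
          intro j
          have hfj : sAct g (sAct (h : Equiv.Perm Ω) (cc1 j)) = sAct (h : Equiv.Perm Ω) (cc1 j) := by
            refine hfx _ ?_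
            rw [List.mem_map]
            exact ⟨cc1 j, by rw [List.mem_ofFn]; exact ⟨j, rfl⟩, rfl⟩
          calc sAct ((h : Equiv.Perm Ω)⁻¹ * g * (h : Equiv.Perm Ω)) (cc1 j)
              = sAct (h : Equiv.Perm Ω)⁻¹ (sAct g (sAct (h : Equiv.Perm Ω) (cc1 j))) := by
                rw [sAct_sAct, sAct_sAct, mul_assoc]
            _ = sAct (h : Equiv.Perm Ω)⁻¹ (sAct (h : Equiv.Perm Ω) (cc1 j)) := by rw [hfj]
            _ = cc1 j := by rw [sAct_sAct, inv_mul_cancel, sAct_smul, one_smul]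
        have hhG : (h : Equiv.Perm Ω) ∈ G := (Subgroup.mem_inf.mp h.2).1
        have hG' : (h : Equiv.Perm Ω)⁻¹ * g * (h : Equiv.Perm Ω) ∈ G :=
          mul_mem (mul_mem (inv_mem hhG) hgG) hhG
        have hfixwi : ((h : Equiv.Perm Ω)⁻¹ * g * (h : Equiv.Perm Ω)) (w i) = w i :=
          hd1 _ hG' hconj
        have hhwi : (h : Equiv.Perm Ω) (w i) = w i := (Subgroup.mem_inf.mp h.2).2
        have : (h : Equiv.Perm Ω)⁻¹ (g ((h : Equiv.Perm Ω) (w i))) = w i := hfixwi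
        rw [hhwi] at this
        have := congrArg (h : Equiv.Perm Ω) this
        rwa [Equiv.Perm.coe_inv, Equiv.apply_symm_apply, hhwi] at this
      · intro _ hmem
        rw [List.mem_map] at hmem
        obtain ⟨d0, hd0', heq⟩ := hmem
        exact hh d0 hd0' heq
  choose L hL1 hL2 hL3 hL4 using hfam
  set LL : List (Set (Fin n → Ω)) := (List.finRange n).flatMap L with hLL
  have hLLmem : ∀ d ∈ LL, ∃ i, d ∈ L i := by
    intro d hd
    obtain ⟨i, _, hmem⟩ := List.mem_flatMap.mp hd
    exact ⟨i, hmem⟩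
  have hccB : ∀ j : Fin LL.length, LL.get j ∈ classes U r := by
    intro j
    obtain ⟨i, hi⟩ := hLLmem (LL.get j) (List.get_mem LL j)
    exact hL1 i _ hi
  have hfin : Set.Finite {c' | ∃ g ∈ (G : Set (Equiv.Perm Ω)),
      (∀ j, sAct g (LL.get j) = LL.get j) ∧ c' = sAct g e} := by
    refine (Set.finite_singleton e).subset ?_
    rintro c' ⟨g, hg, hfx, rfl⟩
    have hfxmem : ∀ d ∈ LL, sAct g d = d := by
      intro d hd
      obtain ⟨j, hj⟩ := List.mem_iff_get.mp hd
      rw [← hj]; exact hfx j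
    have hwfix : tAct g w = w := by
      funext i
      refine hL2 i g hg ?_
      intro d hd
      refine hfxmem d ?_
      rw [hLL]
      exact List.mem_flatMap.mpr ⟨i, List.mem_finRange i, hd⟩
    simp only [Set.mem_singleton_iff]
    exact S.sAct_eq_of_fix_rep hg heB hwe hwfix
  obtain ⟨j, hj⟩ := S.hBnoalg LL.length LL.get e hccB heB hfin
  have hemem : e ∈ LL := by rw [hj]; exact List.get_mem LL j
  obtain ⟨i, hi⟩ := hLLmem e hemem
  by_cases hwa : w i = a
  · rw [hL4 i hwa] at hi
    rw [List.mem_ofFn] at hi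
    obtain ⟨j', hj'⟩ := hi
    exact ⟨j', hj'⟩
  · exact absurd hi (hL3 i hwa)

/-- Uniqueness: an element entangles at most one class. -/
lemma Setup.entangled_unique (S : Setup G U r) {a : Ω} {c₁ c₂ : Set (Fin n → Ω)}
    (hc₁ : c₁ ∈ classes U r) (hc₂ : c₂ ∈ classes U r)
    (h₁ : Entangles a c₁) (h₂ : Entangles a c₂) : c₁ = c₂ := by
  classical
  set K : Subgroup (Equiv.Perm Ω) := G ⊓ stabilizer (Equiv.Perm Ω) c₁ with hK
  have h1 : (orbit ↥K a).Finite :=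
    S.orbit_entangler_finite hc₁ h₁ K le_rfl
  have h2 : (orbit ↥(K ⊓ stabilizer (Equiv.Perm Ω) a) c₂).Finite := by
    refine (S.entangled_finite a).subset ?_
    rw [orbit_subgroup_eq]
    rintro c' ⟨g, hg, rfl⟩
    obtain ⟨hgK, hga0⟩ := Subgroup.mem_inf.mp hg
    have hgG : g ∈ G := (Subgroup.mem_inf.mp hgK).1
    have hga : g • a = a := hga0
    have : Entangles (g a) (sAct g c₂) := entangles_sAct h₂ g
    show g • c₂ ∈ classes U r ∧ Entangles a (g • c₂)
    rw [← sAct_smul]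
    constructor
    · exact S.sAct_mem_classes hgG hc₂
    · have hga' : g a = a := hga
      rw [← hga']
      exact this
  have horb : (orbit ↥K c₂).Finite := orbit_finite_trans K a c₂ h1 h2
  have hfin : Set.Finite {c' | ∃ g ∈ (G : Set (Equiv.Perm Ω)),
      (∀ i, sAct g ((fun _ : Fin 1 => c₁) i) = (fun _ : Fin 1 => c₁) i) ∧ c' = sAct g c₂} := by
    refine horb.subset ?_
    rw [orbit_subgroup_eq]
    rintro c' ⟨g, hg, hgc₁, rfl⟩
    refine ⟨g, Subgroup.mem_inf.mpr ⟨hg, ?_⟩, (sAct_smul g c₂).symm⟩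
    rw [mem_stabilizer_iff, ← sAct_smul]
    exact hgc₁ 0
  obtain ⟨i, hi⟩ := S.hBnoalg 1 (fun _ : Fin 1 => c₁) c₂ (fun _ => hc₁) hc₂ hfin
  exact hi.symm

end EntangleProof

theorem entanglement_bijection
    {Ω : Type} [Countable Ω] [Infinite Ω]
    (G : Subgroup (Equiv.Perm Ω))
    (hGclosed : TopClosedPerm (G : Set (Equiv.Perm Ω)))
    (hGoligo : Oligo (G : Set (Equiv.Perm Ω)))
    (hGnoalg : NoAlg (G : Set (Equiv.Perm Ω)))
    {n : ℕ} (U : Set (Fin n → Ω))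
    (hUinv : ∀ g ∈ G, ∀ u ∈ U, tAct g u ∈ U)
    (r : (Fin n → Ω) → (Fin n → Ω) → Prop)
    (hrefl : ∀ u ∈ U, r u u)
    (hsymm : ∀ u ∈ U, ∀ v ∈ U, r u v → r v u)
    (htrans : ∀ u ∈ U, ∀ v ∈ U, ∀ w ∈ U, r u v → r v w → r u w)
    (hrinv : ∀ g ∈ G, ∀ u ∈ U, ∀ v ∈ U, r u v → r (tAct g u) (tAct g v))
    (hdense : DenseClasses (G : Set (Equiv.Perm Ω)) (classes U r))
    (hBnoalg : NoAlgOn (G : Set (Equiv.Perm Ω)) (classes U r)) :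
    ∃ θ : Ω → Set (Fin n → Ω),
      Set.BijOn θ Set.univ (classes U r) ∧
      (∀ (a : Ω), ∀ c ∈ classes U r, (Entangles a c ↔ θ a = c)) ∧
      (∀ g ∈ G, ∀ a : Ω, θ (g a) = sAct g (θ a)) := by
  classical
  have S : EntangleProof.Setup G U r :=
    ⟨hGnoalg, hUinv, hrefl, hsymm, htrans, hrinv, hdense, hBnoalg⟩
  -- define θ by choice
  have hex : ∀ a : Ω, ∃ c, c ∈ classes U r ∧ Entangles a c := S.exists_entangled
  choose θ hθB hθE using hex
  have huniq : ∀ (a : Ω) (c : Set (Fin n → Ω)), c ∈ classes U r → Entangles a c → θ a = c :=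
    fun a c hc hac => S.entangled_unique (hθB a) hc (hθE a) hac
  -- equivariance
  have hequiv : ∀ g ∈ G, ∀ a : Ω, θ (g a) = sAct g (θ a) := by
    intro g hg a
    refine huniq (g a) (sAct g (θ a)) (S.sAct_mem_classes hg (hθB a)) ?_
    exact EntangleProof.entangles_sAct (hθE a) g
  -- injectivity
  have hinj : ∀ a a' : Ω, θ a = θ a' → a = a' := by
    intro a a' hθeq
    obtain ⟨u, huU, hcu, humem⟩ := S.classes_elim (hθB a)
    have hfin : Set.Finite {b : Ω | ∃ g ∈ (G : Set (Equiv.Perm Ω)),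
        (∀ i, g ((fun _ : Fin 1 => a) i) = (fun _ : Fin 1 => a) i) ∧ b = g a'} := by
      refine (Set.finite_range u).subset ?_
      rintro b ⟨g, hg, hga, rfl⟩
      have hga0 : g a = a := hga 0
      have h1 : Entangles (g a') (sAct g (θ a')) := EntangleProof.entangles_sAct (hθE a') g
      have h2 : sAct g (θ a') = θ a := by
        rw [← hθeq, ← hequiv g hg a, hga0]
      rw [h2] at h1
      exact EntangleProof.entangler_mem_range humem h1
    obtain ⟨i, hi⟩ := hGnoalg 1 (fun _ : Fin 1 => a) a' hfin
    exact hi.symm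
  -- surjectivity
  have hsurj : ∀ c ∈ classes U r, ∃ a : Ω, θ a = c := by
    intro c hc
    obtain ⟨u, huU, hcu, humem⟩ := S.classes_elim hc
    have hfin : Set.Finite {c' | ∃ g ∈ (G : Set (Equiv.Perm Ω)),
        (∀ i, sAct g (θ (u i)) = θ (u i)) ∧ c' = sAct g c} := by
      refine (Set.finite_singleton c).subset ?_
      rintro c' ⟨g, hg, hfx, rfl⟩
      have hufix : tAct g u = u := by
        funext i
        have : θ (g (u i)) = θ (u i) := by
          rw [hequiv g hg (u i), hfx i]
        exact hinj _ _ this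
      simp only [Set.mem_singleton_iff]
      exact S.sAct_eq_of_fix_rep hg hc humem hufix
    obtain ⟨i, hi⟩ := hBnoalg n (fun i => θ (u i)) c (fun i => hθB (u i)) hc hfin
    exact ⟨u i, hi.symm⟩
  refine ⟨θ, ⟨?_, ?_, ?_⟩, ?_, hequiv⟩
  · intro a _
    exact hθB a
  · intro a _ a' _ h
    exact hinj a a' h
  · intro c hc
    obtain ⟨a, ha⟩ := hsurj c hc
    exact ⟨a, Set.mem_univ a, ha⟩
  · intro a c hc
    constructor
    · intro hac
      exact huniq a c hc hac
    · intro h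
      rw [← h]
      exact hθE a
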